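/- Let F be a finite field whose characteristic does not divide |G| for a finite abelian group G, and let u, v ∈ FG satisfy FG·u = Ann(v) and FG·v = Ann(u). Then FG·u ∩ (FG·u)^⊥ = {0} if and only if FG·v = FG·v^{(-1)}. -/

import Mathlib

/-- The annihilator of a single element of the group algebra. -/
def ann {F G : Type*} [Field F] [CommGroup G] (v : MonoidAlgebra F G) :
    Ideal (MonoidAlgebra F G) where
  carrier := {x | x * v = 0}
  add_mem' := by
    intro a b ha hb
    simp only [Set.mem_setOf_eq, add_mul] at *
    rw [ha, hb, add_zero]
  zero_mem' := by simp
  smul_mem' := by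
    intro c x hx
    simp only [Set.mem_setOf_eq, smul_eq_mul] at *
    rw [mul_assoc, hx, mul_zero]

/-- `w^{(-1)} = Σ_g w_{g⁻¹} g`. -/
def inv' {F G : Type*} [Field F] [CommGroup G] (v : MonoidAlgebra F G) :
    MonoidAlgebra F G :=
  MonoidAlgebra.ofCoeff (Finsupp.equivMapDomain (Equiv.inv G) v.coeff)


section
variable {F G : Type*} [Field F] [CommGroup G]

lemma mem_ann {v x : MonoidAlgebra F G} : x ∈ ann v ↔ x * v = 0 := Iff.rfl

lemma inv'_apply (v : MonoidAlgebra F G) (g : G) : (inv' v).coeff g = v.coeff g⁻¹ := by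
  simp [inv', Finsupp.equivMapDomain_apply, MonoidAlgebra.coeff_ofCoeff]

lemma inv'_inv' (v : MonoidAlgebra F G) : inv' (inv' v) = v := by
  ext g; simp [inv'_apply]

lemma inv'_mul (a b : MonoidAlgebra F G) : inv' (a * b) = inv' a * inv' b := by
  have : ∀ x : MonoidAlgebra F G, inv' x = MonoidAlgebra.mapDomain (MulEquiv.inv G) x := by
    intro x
    rw [inv']
    exact congrArg MonoidAlgebra.ofCoeff (Finsupp.equivMapDomain_eq_mapDomain _ _)
  rw [this, this, this]
  exact MonoidAlgebra.mapDomain_mul (MulEquiv.inv G) a b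

lemma inv'_zero : inv' (0 : MonoidAlgebra F G) = 0 := by ext g; simp [inv'_apply]

lemma inv'_eq_zero {a : MonoidAlgebra F G} (h : inv' a = 0) : a = 0 := by
  rw [← inv'_inv' a, h, inv'_zero]

lemma inv'_single (g : G) (r : F) :
    inv' (MonoidAlgebra.single g r) = MonoidAlgebra.single g⁻¹ r := by
  ext x
  rw [inv'_apply]
  classical
  rw [MonoidAlgebra.coeff_single, MonoidAlgebra.coeff_single, Finsupp.single_apply, Finsupp.single_apply]
  simp only [inv_eq_iff_eq_inv]

/-- The pairing as a coefficient of a product. -/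
lemma pairing_eq [Fintype G] (w c : MonoidAlgebra F G) :
    ∑ g : G, w.coeff g * c.coeff g = (w * inv' c).coeff 1 := by
  rw [MonoidAlgebra.coeff_mul_apply_right]
  rw [Finsupp.sum_fintype _ _ (fun a => by simp)]
  refine Fintype.sum_equiv (Equiv.inv G) _ _ (fun g => ?_)
  simp [inv'_apply]

/-- membership in span of inv' v -/
lemma mem_span_inv' {u v : MonoidAlgebra F G}
    (hv : (Ideal.span {v} : Ideal (MonoidAlgebra F G)) = ann u)
    (w : MonoidAlgebra F G) :
    w ∈ (Ideal.span {inv' v} : Ideal (MonoidAlgebra F G)) ↔ w * inv' u = 0 := by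
  constructor
  · intro h
    obtain ⟨a, rfl⟩ := Ideal.mem_span_singleton'.mp h
    have hvu : v * u = 0 := by
      have : v ∈ ann u := hv ▸ Ideal.mem_span_singleton_self v
      exact this
    rw [mul_assoc, ← inv'_mul, hvu, inv'_zero, mul_zero]
  · intro h
    have h2 : inv' w * u = 0 := by
      have := congrArg inv' h
      rw [inv'_mul, inv'_inv', inv'_zero] at this
      exact this
    have : inv' w ∈ ann u := h2
    rw [← hv] at this
    obtain ⟨a, ha⟩ := Ideal.mem_span_singleton'.mp this
    refine Ideal.mem_span_singleton'.mpr ⟨inv' a, ?_⟩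
    rw [← inv'_mul, ha, inv'_inv']

/-- orthogonality to the whole ideal span u iff kills inv' u -/
lemma orth_iff [Fintype G] (u w : MonoidAlgebra F G) :
    (∀ c ∈ (Ideal.span {u} : Ideal (MonoidAlgebra F G)), ∑ g : G, w.coeff g * c.coeff g = 0)
      ↔ w * inv' u = 0 := by
  constructor
  · intro h
    ext g
    have := h (MonoidAlgebra.single g 1 * u)
      (Ideal.mem_span_singleton'.mpr ⟨MonoidAlgebra.single g 1, rfl⟩)
    rw [pairing_eq, inv'_mul, inv'_single, ← mul_assoc, mul_right_comm,
      MonoidAlgebra.coeff_mul_single_apply] at this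
    simpa using this
  · intro h c hc
    obtain ⟨a, rfl⟩ := Ideal.mem_span_singleton'.mp hc
    rw [pairing_eq, inv'_mul, show w * (inv' a * inv' u) = w * inv' u * inv' a by ring, h,
      zero_mul]
    simp

end

open MonoidAlgebra Finsupp

universe u1 u2

section
variable {F F' H : Type*} [CommSemiring F] [CommSemiring F'] [CommMonoid H]

/-- mapRange as ring hom on monoid algebras over commutative data -/
noncomputable def mapRangeRH (e : F →+* F') : MonoidAlgebra F H →+* MonoidAlgebra F' H :=
  MonoidAlgebra.liftNCRingHom (MonoidAlgebra.singleOneRingHom.comp e)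
    (MonoidAlgebra.of F' H) (fun _ _ => Commute.all _ _)

lemma mapRangeRH_single (e : F →+* F') (a : H) (b : F) :
    mapRangeRH e (MonoidAlgebra.single a b) = MonoidAlgebra.single a (e b) := by
  simp [mapRangeRH, MonoidAlgebra.liftNCRingHom, MonoidAlgebra.liftNC_single,
    MonoidAlgebra.singleOneRingHom, MonoidAlgebra.of_apply,
    MonoidAlgebra.single_mul_single]

/-- mapRange as ring equiv -/
noncomputable def mapRangeRE (e : F ≃+* F') : MonoidAlgebra F H ≃+* MonoidAlgebra F' H :=
  RingEquiv.ofRingHom (mapRangeRH (H := H) e.toRingHom) (mapRangeRH (H := H) e.symm.toRingHom)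
    (MonoidAlgebra.ringHom_ext (fun b => by simp [mapRangeRH_single])
      (fun a => by simp [mapRangeRH_single]))
    (MonoidAlgebra.ringHom_ext (fun b => by simp [mapRangeRH_single])
      (fun a => by simp [mapRangeRH_single]))

end

lemma semis (F : Type u1) (G : Type u2) [Field F] [CommGroup G] [Fintype G]
    [NeZero (Fintype.card G : F)] : IsSemisimpleRing (MonoidAlgebra F G) := by
  let e1 : MonoidAlgebra F G ≃+* MonoidAlgebra F (ULift.{u1} G) :=
    (MonoidAlgebra.domCongr F F MulEquiv.ulift.symm).toRingEquiv
  let e2 : MonoidAlgebra F (ULift.{u1} G) ≃+* MonoidAlgebra (ULift.{u2} F) (ULift.{u1} G) :=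
    mapRangeRE ULift.ringEquiv.symm
  haveI : NeZero (Fintype.card (ULift.{u1} G) : ULift.{u2} F) := by
    constructor
    intro h
    apply NeZero.ne (Fintype.card G : F)
    have := congrArg (ULift.ringEquiv (R := F)) h
    rw [map_natCast, map_zero, Fintype.card_ulift] at this
    exact this
  haveI : NeZero (Nat.card (ULift.{u1} G) : ULift.{u2} F) := by rwa [Nat.card_eq_fintype_card]
  exact ((e1.trans e2).symm).isSemisimpleRing

theorem stmt_12 (F G : Type*) [Field F] [Fintype F] [CommGroup G] [Fintype G]
    (hchar : ¬ (ringChar F ∣ Fintype.card G))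
    (u v : MonoidAlgebra F G)
    (hu : (Ideal.span {u} : Ideal (MonoidAlgebra F G)) = ann v)
    (hv : (Ideal.span {v} : Ideal (MonoidAlgebra F G)) = ann u) :
    {w : MonoidAlgebra F G | w ∈ (Ideal.span {u} : Ideal (MonoidAlgebra F G)) ∧
        ∀ c ∈ (Ideal.span {u} : Ideal (MonoidAlgebra F G)), ∑ g : G, w.coeff g * c.coeff g = 0}
      = {0} ↔
    (Ideal.span {v} : Ideal (MonoidAlgebra F G)) = Ideal.span {inv' v} := by
  haveI : NeZero ((Fintype.card G : F)) :=
    ⟨fun h => hchar ((ringChar.spec F (Fintype.card G)).mp h)⟩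
  haveI := semis F G
  -- rewrite the orthogonality set
  have hset : {w : MonoidAlgebra F G | w ∈ (Ideal.span {u} : Ideal (MonoidAlgebra F G)) ∧
        ∀ c ∈ (Ideal.span {u} : Ideal (MonoidAlgebra F G)), ∑ g : G, w.coeff g * c.coeff g = 0}
      = {w : MonoidAlgebra F G | w ∈ (Ideal.span {u} : Ideal (MonoidAlgebra F G)) ∧
        w ∈ (Ideal.span {inv' v} : Ideal (MonoidAlgebra F G))} := by
    ext w
    simp only [Set.mem_setOf_eq]
    exact and_congr_right fun _ => (orth_iff u w).trans (mem_span_inv' hv w).symm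
  rw [hset]
  -- decomposition of 1
  obtain ⟨W, hW⟩ := exists_isCompl (Ideal.span {v} : Ideal (MonoidAlgebra F G))
  have hWle : W ≤ Ideal.span {u} := by
    intro w hw
    rw [hu, mem_ann]
    have h1 : w * v ∈ W := by
      have := W.smul_mem v hw
      rwa [smul_eq_mul, mul_comm] at this
    have h2 : w * v ∈ (Ideal.span {v} : Ideal (MonoidAlgebra F G)) :=
      Ideal.mem_span_singleton'.mpr ⟨w, rfl⟩
    have h3 : w * v ∈ (Ideal.span {v} ⊓ W : Ideal (MonoidAlgebra F G)) := ⟨h2, h1⟩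
    rwa [hW.inf_eq_bot, Submodule.mem_bot] at h3
  have hsup : (Ideal.span {u} : Ideal (MonoidAlgebra F G)) ⊔ Ideal.span {v} = ⊤ := by
    rw [eq_top_iff, ← hW.sup_eq_top, sup_comm (a := (Ideal.span {u} : Ideal (MonoidAlgebra F G)))]
    exact sup_le_sup_left hWle _
  have h1 : (1 : MonoidAlgebra F G) ∈
      (Ideal.span {u} : Ideal (MonoidAlgebra F G)) ⊔ Ideal.span {v} := by
    rw [hsup]; trivial
  rw [Submodule.mem_sup] at h1
  obtain ⟨a, ha, b, hb, hab⟩ := h1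
  -- intersection is zero
  have hint : ∀ x : MonoidAlgebra F G, x ∈ (Ideal.span {u} : Ideal (MonoidAlgebra F G)) →
      x ∈ (Ideal.span {v} : Ideal (MonoidAlgebra F G)) → x = 0 := by
    intro x hxu hxv
    have hxv0 : x * v = 0 := by rw [hu] at hxu; exact hxu
    have hxu0 : x * u = 0 := by rw [hv] at hxv; exact hxv
    obtain ⟨a', rfl⟩ := Ideal.mem_span_singleton'.mp ha
    obtain ⟨b', rfl⟩ := Ideal.mem_span_singleton'.mp hb
    calc x = x * (a' * u + b' * v) := by rw [hab, mul_one]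
    _ = a' * (x * u) + b' * (x * v) := by ring
    _ = 0 := by rw [hxu0, hxv0]; ring
  constructor
  · intro hS
    have hle : (Ideal.span {inv' v} : Ideal (MonoidAlgebra F G)) ≤ Ideal.span {v} := by
      intro x hx
      have hxa1 : x * a ∈ (Ideal.span {u} : Ideal (MonoidAlgebra F G)) :=
        Ideal.mul_mem_left _ x ha
      have hxa2 : x * a ∈ (Ideal.span {inv' v} : Ideal (MonoidAlgebra F G)) :=
        Ideal.mul_mem_right a _ hx
      have h0 : x * a ∈ ({0} : Set (MonoidAlgebra F G)) := hS ▸ ⟨hxa1, hxa2⟩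
      have hxa : x * a = 0 := h0
      have hxb : x * b ∈ (Ideal.span {v} : Ideal (MonoidAlgebra F G)) :=
        Ideal.mul_mem_left _ x hb
      have hx' : x = x * a + x * b := by rw [← mul_add, hab, mul_one]
      rw [hx', hxa, zero_add]
      exact hxb
    refine le_antisymm ?_ hle
    intro x hx
    obtain ⟨c, rfl⟩ := Ideal.mem_span_singleton'.mp hx
    have hc1 : inv' (c * v) ∈ (Ideal.span {inv' v} : Ideal (MonoidAlgebra F G)) :=
      Ideal.mem_span_singleton'.mpr ⟨inv' c, (inv'_mul c v).symm⟩
    obtain ⟨d, hd⟩ := Ideal.mem_span_singleton'.mp (hle hc1)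
    refine Ideal.mem_span_singleton'.mpr ⟨inv' d, ?_⟩
    rw [← inv'_mul, hd, inv'_inv']
  · intro heq
    ext w
    simp only [Set.mem_setOf_eq, Set.mem_singleton_iff]
    constructor
    · rintro ⟨hw1, hw2⟩
      rw [← heq] at hw2
      exact hint w hw1 hw2
    · rintro rfl
      exact ⟨Ideal.zero_mem _, Ideal.zero_mem _⟩
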